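/- A quadratic state module M ⊆ 𝐒 is archimedean if and only if there exists N > 0 such that N − x_1² − ⋯ − x_n² ∈ M. -/

import Mathlib

open scoped BigOperators Matrix Kronecker

namespace StatePoly

/-! ### Words and symmetrized words -/

/-- Words in the letters `x_1, …, x_n`: the free monoid on `Fin n`. -/
abbrev Word (n : ℕ) := FreeMonoid (Fin n)

/-- The word reversal (the involution `⋆` on words). -/
def wordRev {n : ℕ} (w : Word n) : Word n := FreeMonoid.reverse w

/-- Two nonempty words are identified iff they are equal or reverses of each other;
this realizes the relation `ς(w) = ς(w⋆)`. -/
def wordSetoid (n : ℕ) : Setoid {l : List (Fin n) // l ≠ []} where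
  r u v := u.1 = v.1 ∨ u.1 = v.1.reverse
  iseqv := by
    constructor
    · intro u; exact Or.inl rfl
    · rintro u v (h | h)
      · exact Or.inl h.symm
      · right; rw [h, List.reverse_reverse]
    · rintro u v w (h1 | h1) (h2 | h2)
      · exact Or.inl (h1.trans h2)
      · right; rw [h1, h2]
      · right; rw [h1, h2]
      · left; rw [h1, h2, List.reverse_reverse]

/-- Symbols `ς(w)`, `w` a nonempty word, modulo `ς(w) = ς(w⋆)`. -/
def SW (n : ℕ) := Quotient (wordSetoid n)

/-- The commutative algebra `𝒮` of state polynomials: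
a polynomial ring in the symbols `ς(w)`. -/
abbrev SPoly (n : ℕ) := MvPolynomial (SW n) ℝ

/-- The algebra `𝐒 = 𝒮 ⊗ ℝ⟨x⟩` of nc state polynomials, realized as the monoid algebra
of the free monoid over the polynomial ring `𝒮`. -/
abbrev NCSPoly (n : ℕ) := MonoidAlgebra (SPoly n) (Word n)

variable {n : ℕ}

/-- The state symbol `ς(w)` of a word, with `ς(1) = 1`. -/
noncomputable def sigWordL (l : List (Fin n)) : SPoly n :=
  if h : l = [] then 1 else MvPolynomial.X (Quotient.mk (wordSetoid n) ⟨l, h⟩)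

/-- The unital `𝒮`-linear map `ς : 𝐒 → 𝒮`. -/
noncomputable def sig (f : NCSPoly n) : SPoly n :=
  Finsupp.sum f.coeff fun w c => c * sigWordL (FreeMonoid.toList w)

/-- The involution `⋆` on `𝐒`: it fixes `𝒮 ∪ {x_1, …, x_n}` pointwise and reverses words. -/
noncomputable def ncStar (f : NCSPoly n) : NCSPoly n :=
  MonoidAlgebra.ofCoeff (Finsupp.mapDomain wordRev f.coeff)

/-- The embedding `𝒮 ⊆ 𝐒`. -/
noncomputable def iotaS (p : SPoly n) : NCSPoly n := MonoidAlgebra.single 1 p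

/-- The variable `x_i` as an nc state polynomial. -/
noncomputable def ncX (i : Fin n) : NCSPoly n := MonoidAlgebra.single (FreeMonoid.of i) 1

/-- A real constant as an nc state polynomial. -/
noncomputable def ncConst (r : ℝ) : NCSPoly n := iotaS (MvPolynomial.C r)

/-- `f ∈ 𝐒` lies in the free algebra `ℝ⟨x⟩ ⊆ 𝐒` iff all its coefficients are real constants. -/
def IsFreePoly (f : NCSPoly n) : Prop := ∀ w : Word n, ∃ r : ℝ, f.coeff w = MvPolynomial.C r

/-! ### Degrees -/

/-- `|w|` on symmetrized words. -/
def swDeg : SW n → ℕ :=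
  Quotient.lift (fun l : {l : List (Fin n) // l ≠ []} => l.1.length)
    (by rintro u v (h | h) <;> simp [h])

/-- The degree of a monomial `∏ ς(u_j)^{e_j}`, namely `∑ e_j |u_j|`. -/
def monoWeight (m : SW n →₀ ℕ) : ℕ := m.sum fun q e => e * swDeg q

/-- The degree of a state polynomial. -/
noncomputable def sDeg (p : SPoly n) : ℕ := p.support.sup monoWeight

/-- The degree of an nc state polynomial: the maximum over the `𝐒`-words appearing in it of
`deg ς(u_1)⋯ς(u_m)v = |v| + ∑_j |u_j|`. -/
noncomputable def ncDeg (f : NCSPoly n) : ℕ :=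
  (Finsupp.support f.coeff).sup fun w => sDeg (f.coeff w) + (FreeMonoid.toList w).length

lemma sDeg_zero : sDeg (0 : SPoly n) = 0 := by
  simp [sDeg, MvPolynomial.support_zero]

lemma sDeg_add_le (p q : SPoly n) : sDeg (p + q) ≤ max (sDeg p) (sDeg q) := by
  classical
  refine Finset.sup_le fun m hm => ?_
  rcases Finset.mem_union.mp (MvPolynomial.support_add hm) with h | h
  · exact le_max_of_le_left (Finset.le_sup h)
  · exact le_max_of_le_right (Finset.le_sup h)

lemma sDeg_smul_le (c : ℝ) (p : SPoly n) : sDeg (c • p) ≤ sDeg p :=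
  Finset.sup_le fun _m hm => Finset.le_sup (MvPolynomial.support_smul hm)

lemma sDeg_one : sDeg (1 : SPoly n) = 0 := by
  classical
  refine le_antisymm (Finset.sup_le fun m hm => ?_) (Nat.zero_le _)
  have : m = 0 := by
    by_contra h
    have := MvPolynomial.mem_support_iff.mp hm
    rw [MvPolynomial.coeff_one, if_neg (fun he => h he.symm)] at this
    exact this rfl
  subst this
  simp [monoWeight]

/-- The subspace `𝒮_{k}` of state polynomials of degree at most `k`. -/
noncomputable def SPolyLe (n k : ℕ) : Submodule ℝ (SPoly n) where
  carrier := {p | sDeg p ≤ k}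
  add_mem' := fun {p q} hp hq =>
    le_trans (sDeg_add_le p q) (max_le hp hq)
  zero_mem' := by simp [Set.mem_setOf_eq, sDeg_zero]
  smul_mem' := fun c p hp => le_trans (sDeg_smul_le c p) hp

lemma one_mem_SPolyLe (k : ℕ) : (1 : SPoly n) ∈ SPolyLe n k := by
  show sDeg (1 : SPoly n) ≤ k
  simp [sDeg_one]

/-- Extension by zero of a linear functional on `𝒮_{k}` to `𝒮`
(used to refer to values of truncated functionals). -/
noncomputable def lext {n k : ℕ} (L : SPolyLe n k →ₗ[ℝ] ℝ) (p : SPoly n) : ℝ :=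
  if h : sDeg p ≤ k then L ⟨p, h⟩ else 0

/-! ### Evaluations -/

section Eval

variable {A : Type*} [Ring A] [Module ℝ A]

/-- Evaluation of a word at a tuple `X`. -/
noncomputable def wEvalL (X : Fin n → A) (l : List (Fin n)) : A := (l.map X).prod

/-- The value assigned to the symbol `ς(w)`: `λ(w(X))`. -/
noncomputable def stVal (lam : A → ℝ) (X : Fin n → A) (q : SW n) : ℝ :=
  lam (wEvalL X (Quotient.out q).1)

/-- Evaluation `a(λ; X) ∈ ℝ` of a state polynomial. -/
noncomputable def sEval (lam : A → ℝ) (X : Fin n → A) (p : SPoly n) : ℝ :=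
  MvPolynomial.eval (stVal lam X) p

/-- Evaluation `f(λ; X) ∈ A` of an nc state polynomial. -/
noncomputable def ncEval (lam : A → ℝ) (X : Fin n → A) (f : NCSPoly n) : A :=
  Finsupp.sum f.coeff fun w c => sEval lam X c • wEvalL X (FreeMonoid.toList w)

end Eval

/-! ### States on matrix algebras -/

/-- A density matrix: positive semidefinite with trace 1. -/
def IsDensity {k : ℕ} (ρ : Matrix (Fin k) (Fin k) ℝ) : Prop :=
  ρ.PosSemidef ∧ ρ.trace = 1

/-- The state on `k×k` matrices induced by a density matrix. -/
noncomputable def matState {k : ℕ} (ρ : Matrix (Fin k) (Fin k) ℝ) :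
    Matrix (Fin k) (Fin k) ℝ → ℝ := fun Y => (ρ * Y).trace

/-- The vector state on `k×k` matrices induced by a vector `ψ`. -/
noncomputable def vecStateM {k : ℕ} (ψ : Fin k → ℝ) :
    Matrix (Fin k) (Fin k) ℝ → ℝ := fun Y => ψ ⬝ᵥ Y.mulVec ψ

/-! ### States on B(H) -/

section Op

variable (H : Type*) [NormedAddCommGroup H] [InnerProductSpace ℝ H] [CompleteSpace H]

/-- A state on `B(H)`: a unital positive `⋆`-linear functional. -/
def IsState (lam : (H →L[ℝ] H) →ₗ[ℝ] ℝ) : Prop :=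
  lam 1 = 1 ∧ (∀ Y : H →L[ℝ] H, lam (ContinuousLinearMap.adjoint Y) = lam Y) ∧
    ∀ Y : H →L[ℝ] H, 0 ≤ lam (Y * ContinuousLinearMap.adjoint Y)

/-- A vector state on `B(H)`. -/
def IsVecState (lam : (H →L[ℝ] H) →ₗ[ℝ] ℝ) : Prop :=
  ∃ v : H, ‖v‖ = 1 ∧ ∀ Y : H →L[ℝ] H, lam Y = inner ℝ (Y v) v

/-- The state semialgebraic set `𝒟_C^∞` determined by the constraint set `C ⊆ 𝐒`. -/
def DCinf (C : Set (NCSPoly n)) :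
    Set ((((H →L[ℝ] H) →ₗ[ℝ] ℝ)) × (Fin n → (H →L[ℝ] H))) :=
  {p | IsState H p.1 ∧ (∀ i, ContinuousLinearMap.adjoint (p.2 i) = p.2 i) ∧
    ∀ c ∈ C, (ncEval (⇑p.1) p.2 c).IsPositive}

/-- The subset `vec-𝒟_C^∞` of `𝒟_C^∞` in which the state is a vector state. -/
def vecDCinf (C : Set (NCSPoly n)) :
    Set ((((H →L[ℝ] H) →ₗ[ℝ] ℝ)) × (Fin n → (H →L[ℝ] H))) :=
  {p ∈ DCinf H C | IsVecState H p.1}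

end Op

/-! ### Positivity structures -/

/-- `Ω`: sums of products of elements `ς(h h⋆)`, `h ∈ 𝐒`. -/
def Omega (n : ℕ) : Set (SPoly n) :=
  {x | ∃ (m : ℕ) (g : Fin m → SPoly n),
    (∀ i, ∃ (mi : ℕ) (h : Fin mi → NCSPoly n), g i = ∏ j, sig (h j * ncStar (h j))) ∧
    x = ∑ i, g i}

/-- Membership in the smallest subset of `𝒮` containing `{1} ∪ S` that is closed under
addition and under multiplication by squares of elements of `A`. -/
inductive QMemIn (A S : Set (SPoly n)) : SPoly n → Prop
  | base {s : SPoly n} : s ∈ insert (1 : SPoly n) S → QMemIn A S s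
  | add {p q : SPoly n} : QMemIn A S p → QMemIn A S q → QMemIn A S (p + q)
  | mul_sq {a p : SPoly n} : a ∈ A → QMemIn A S p → QMemIn A S (a ^ 2 * p)

/-- The quadratic module generated by `S` in `𝒮`. -/
def QM (S : Set (SPoly n)) : Set (SPoly n) := {x | QMemIn Set.univ S x}

/-- The set `C^ς = {ς(p c p⋆) : p ∈ ℝ⟨x⟩, c ∈ {1} ∪ C}`. -/
def Csig (C : Set (NCSPoly n)) : Set (SPoly n) :=
  {x | ∃ p : NCSPoly n, IsFreePoly p ∧ ∃ c ∈ insert (1 : NCSPoly n) C,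
    x = sig (p * c * ncStar p)}

/-- A balanced constraint set: closed under `⋆`, and non-symmetric elements come in `±` pairs. -/
def Balanced (C : Set (NCSPoly n)) : Prop :=
  (∀ c ∈ C, ncStar c ∈ C) ∧ ∀ c ∈ C, c ≠ ncStar c → -c ∈ C

/-- An algebraically bounded constraint set: `N - x_1^2 - ⋯ - x_n^2 = ∑ p_i c_i p_i⋆` with
`c_i ∈ {1} ∪ C ∩ ℝ⟨x⟩` and `p_i ∈ ℝ⟨x⟩`. -/
def AlgBounded (C : Set (NCSPoly n)) : Prop :=
  ∃ N : ℝ, 0 < N ∧ ∃ (m : ℕ) (p c : Fin m → NCSPoly n),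
    (∀ i, IsFreePoly (p i)) ∧
    (∀ i, c i = 1 ∨ (c i ∈ C ∧ IsFreePoly (c i))) ∧
    ncConst N - ∑ j : Fin n, ncX j ^ 2 = ∑ i, p i * c i * ncStar (p i)

/-- The truncated quadratic module `M(C)_d`. -/
def MCd (C : Set (NCSPoly n)) (d : ℕ) : Set (SPoly n) :=
  {x | ∃ (K : ℕ) (f c : Fin K → NCSPoly n),
    (∀ i, c i ∈ insert (1 : NCSPoly n) C) ∧
    (∀ i, ncDeg (f i * c i * ncStar (f i)) ≤ 2 * d) ∧
    x = ∑ i, sig (f i * c i * ncStar (f i))}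

end StatePoly

namespace StatePoly

/-- A quadratic state module `M ⊆ 𝐒`: `1 ∈ M`, `M + M ⊆ M`, `f M f⋆ ⊆ M` for every `f ∈ 𝐒`,
and `ς(M) ⊆ M`. -/
structure IsQuadStateModule {n : ℕ} (M : Set (NCSPoly n)) : Prop where
  one_mem : (1 : NCSPoly n) ∈ M
  add_mem : ∀ p ∈ M, ∀ q ∈ M, p + q ∈ M
  conj_mem : ∀ f : NCSPoly n, ∀ p ∈ M, f * p * ncStar f ∈ M
  sig_mem : ∀ p ∈ M, iotaS (sig p) ∈ M

/-- A quadratic state module is archimedean if for every symmetric `f ∈ 𝐒` there is `N > 0`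
with `N ± f ∈ M`. -/
def QSMArchimedean {n : ℕ} (M : Set (NCSPoly n)) : Prop :=
  ∀ f : NCSPoly n, ncStar f = f →
    ∃ N : ℝ, 0 < N ∧ ncConst N + f ∈ M ∧ ncConst N - f ∈ M


/-! ### Auxiliary lemmas for Statement 9 -/

section Aux

variable {n : ℕ}

lemma ncStar_single (w : Word n) (p : SPoly n) :
    ncStar (MonoidAlgebra.single w p) = MonoidAlgebra.single (wordRev w) p := by
  rw [ncStar, MonoidAlgebra.coeff_single, Finsupp.mapDomain_single]; rfl

lemma ncStar_add (f g : NCSPoly n) : ncStar (f + g) = ncStar f + ncStar g :=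
  congrArg MonoidAlgebra.ofCoeff Finsupp.mapDomain_add

lemma ncStar_sub (f g : NCSPoly n) : ncStar (f - g) = ncStar f - ncStar g :=
  congrArg MonoidAlgebra.ofCoeff (map_sub (Finsupp.mapDomain.addMonoidHom wordRev) f.coeff g.coeff)

lemma ncStar_zero : ncStar (0 : NCSPoly n) = 0 :=
  congrArg MonoidAlgebra.ofCoeff Finsupp.mapDomain_zero

lemma ncStar_smul (r : ℝ) (f : NCSPoly n) : ncStar (r • f) = r • ncStar f :=
  congrArg MonoidAlgebra.ofCoeff (Finsupp.mapDomain_smul r f.coeff)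

lemma ncStar_ncStar (f : NCSPoly n) : ncStar (ncStar f) = f := by
  rw [ncStar, ncStar, MonoidAlgebra.coeff_ofCoeff, ← Finsupp.mapDomain_comp]
  have h : wordRev ∘ wordRev = (id : Word n → Word n) := by
    funext w; simp [wordRev, FreeMonoid.reverse_reverse]
  rw [h, Finsupp.mapDomain_id]

lemma ncStar_mul (f g : NCSPoly n) : ncStar (f * g) = ncStar g * ncStar f := by
  induction f using MonoidAlgebra.induction_linear with
  | zero => simp [ncStar_zero]
  | add f₁ f₂ h1 h2 => rw [add_mul, ncStar_add, ncStar_add, mul_add, h1, h2]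
  | single a b =>
    induction g using MonoidAlgebra.induction_linear with
    | zero => simp [ncStar_zero]
    | add g₁ g₂ h1 h2 => rw [mul_add, ncStar_add, ncStar_add, add_mul, h1, h2]
    | single c d =>
      rw [MonoidAlgebra.single_mul_single, ncStar_single, ncStar_single,
        ncStar_single, MonoidAlgebra.single_mul_single, mul_comm d b]
      congr 1
      exact FreeMonoid.reverse_mul

lemma ncStar_one : ncStar (1 : NCSPoly n) = 1 := by
  rw [MonoidAlgebra.one_def, ncStar_single]; rfl

lemma ncStar_iotaS (p : SPoly n) : ncStar (iotaS p) = iotaS p := by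
  rw [iotaS, ncStar_single]; rfl

lemma ncStar_ncConst (r : ℝ) : ncStar (ncConst r : NCSPoly n) = ncConst r :=
  ncStar_iotaS _

lemma ncStar_ncX (i : Fin n) : ncStar (ncX i) = ncX i := by
  rw [ncX, ncStar_single]; rfl

lemma iotaS_mul (p : SPoly n) (f : NCSPoly n) : iotaS p * f = p • f := by
  ext w : 2
  rw [iotaS, MonoidAlgebra.single_one_mul_apply, MonoidAlgebra.coeff_smul_apply, smul_eq_mul]

lemma mul_iotaS (f : NCSPoly n) (p : SPoly n) : f * iotaS p = iotaS p * f := by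
  ext w
  rw [iotaS, MonoidAlgebra.single_one_mul_apply, MonoidAlgebra.mul_single_one_apply,
    mul_comm]

lemma iotaS_mul_iotaS (p q : SPoly n) : iotaS p * iotaS q = iotaS (p * q) := by
  rw [iotaS, iotaS, iotaS, MonoidAlgebra.single_mul_single, one_mul]

lemma iotaS_add (p q : SPoly n) : iotaS (p + q) = iotaS p + iotaS q :=
  MonoidAlgebra.single_add _ _ _

lemma iotaS_sub (p q : SPoly n) : iotaS (p - q) = iotaS p - iotaS q :=
  MonoidAlgebra.single_sub _ _ _

lemma ncConst_mul_eq_smul (r : ℝ) (f : NCSPoly n) : ncConst r * f = r • f := by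
  refine MonoidAlgebra.ext (Finsupp.ext fun w => ?_)
  rw [ncConst, iotaS, MonoidAlgebra.single_one_mul_apply]
  show MvPolynomial.C r * f.coeff w = (r • f).coeff w
  rw [MonoidAlgebra.coeff_smul_apply, MvPolynomial.smul_eq_C_mul]

lemma mul_ncConst_eq_smul (f : NCSPoly n) (r : ℝ) : f * ncConst r = r • f := by
  rw [ncConst, mul_iotaS, ← ncConst, ncConst_mul_eq_smul]

lemma ncConst_eq_smul_one (r : ℝ) : (ncConst r : NCSPoly n) = r • 1 := by
  rw [← ncConst_mul_eq_smul, mul_one]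

lemma ncConst_add (a b : ℝ) : (ncConst (a + b) : NCSPoly n) = ncConst a + ncConst b := by
  rw [ncConst, ncConst, ncConst, map_add, iotaS_add]

lemma ncConst_one : (ncConst 1 : NCSPoly n) = 1 := by
  rw [ncConst, map_one, iotaS, MonoidAlgebra.one_def]

lemma ncConst_zero : (ncConst 0 : NCSPoly n) = 0 := by
  rw [ncConst, map_zero, iotaS]
  exact MonoidAlgebra.single_zero 1

lemma ncConst_mul (a b : ℝ) : (ncConst (a * b) : NCSPoly n) = ncConst a * ncConst b := by
  rw [ncConst, ncConst, ncConst, map_mul, iotaS_mul_iotaS]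

lemma ncConst_sub (a b : ℝ) : (ncConst (a - b) : NCSPoly n) = ncConst a - ncConst b := by
  rw [ncConst, ncConst, ncConst, map_sub, iotaS_sub]

/-! #### `sig` lemmas -/

lemma sig_single (w : Word n) (p : SPoly n) :
    sig (MonoidAlgebra.single w p) = p * sigWordL (FreeMonoid.toList w) := by
  rw [sig, MonoidAlgebra.coeff_single]
  exact Finsupp.sum_single_index (zero_mul _)

lemma sig_add (f g : NCSPoly n) : sig (f + g) = sig f + sig g := by
  simp only [sig, MonoidAlgebra.coeff_add]; exact
  Finsupp.sum_add_index' (fun w => zero_mul _) (fun w b c => add_mul _ _ _)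

lemma sig_sub (f g : NCSPoly n) : sig (f - g) = sig f - sig g := by
  simp only [sig, MonoidAlgebra.coeff_sub]; exact
  Finsupp.sum_sub_index (fun w b c => sub_mul _ _ _)

lemma sig_zero : sig (0 : NCSPoly n) = 0 := by
  simp only [sig, MonoidAlgebra.coeff_zero]; exact
  Finsupp.sum_zero_index

lemma sig_iotaS_mul (p : SPoly n) (f : NCSPoly n) : sig (iotaS p * f) = p * sig f := by
  induction f using MonoidAlgebra.induction_linear with
  | zero => rw [mul_zero, sig_zero, mul_zero]
  | add f₁ f₂ h1 h2 => rw [mul_add, sig_add, sig_add, h1, h2, mul_add]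
  | single w q =>
    rw [iotaS, MonoidAlgebra.single_mul_single, one_mul, sig_single, sig_single,
      mul_assoc]

lemma sig_mul_iotaS (f : NCSPoly n) (p : SPoly n) : sig (f * iotaS p) = p * sig f := by
  rw [mul_iotaS, sig_iotaS_mul]

lemma sigWordL_nil : sigWordL ([] : List (Fin n)) = 1 := dif_pos rfl

lemma sig_iotaS (p : SPoly n) : sig (iotaS p) = p := by
  rw [iotaS, sig_single]
  show p * sigWordL [] = p
  rw [sigWordL_nil, mul_one]

lemma sig_ncConst (r : ℝ) : sig (ncConst r : NCSPoly n) = MvPolynomial.C r :=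
  sig_iotaS _

lemma sigWordL_reverse (l : List (Fin n)) : sigWordL l.reverse = sigWordL l := by
  rcases eq_or_ne l [] with h | h
  · simp [h]
  · have h' : l.reverse ≠ [] := by simpa using h
    rw [sigWordL, sigWordL, dif_neg h', dif_neg h]
    congr 1
    exact Quotient.sound (Or.inr rfl)

lemma sig_ncStar (f : NCSPoly n) : sig (ncStar f) = sig f := by
  induction f using MonoidAlgebra.induction_linear with
  | zero => rw [ncStar_zero]
  | add f₁ f₂ h1 h2 => rw [ncStar_add, sig_add, sig_add, h1, h2]
  | single w p =>
    rw [ncStar_single, sig_single, sig_single]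
    congr 1
    show sigWordL (FreeMonoid.toList w).reverse = _
    exact sigWordL_reverse _

lemma ncStar_sum {s : Finset (Fin n)} (g : Fin n → NCSPoly n) :
    ncStar (∑ i ∈ s, g i) = ∑ i ∈ s, ncStar (g i) :=
  map_sum ({ toFun := ncStar, map_zero' := ncStar_zero, map_add' := ncStar_add } :
    NCSPoly n →+ NCSPoly n) g s

/-! #### Membership lemmas -/

variable {M : Set (NCSPoly n)} (hM : IsQuadStateModule M)

include hM

lemma M_zero : (0 : NCSPoly n) ∈ M := by
  have := hM.conj_mem 0 1 hM.one_mem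
  simpa using this

lemma M_sq (h : NCSPoly n) : h * ncStar h ∈ M := by
  have := hM.conj_mem h 1 hM.one_mem
  simpa [mul_one] using this

lemma M_smul {r : ℝ} (hr : 0 ≤ r) {m : NCSPoly n} (hm : m ∈ M) : r • m ∈ M := by
  have := hM.conj_mem (ncConst (Real.sqrt r)) m hm
  rw [ncStar_ncConst, mul_ncConst_eq_smul, ncConst_mul_eq_smul, smul_comm,
    smul_smul, Real.mul_self_sqrt hr] at this
  exact this

lemma M_sum {s : Finset (Fin n)} {g : Fin n → NCSPoly n}
    (hg : ∀ i ∈ s, g i ∈ M) : (∑ i ∈ s, g i) ∈ M := by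
  classical
  induction s using Finset.induction_on with
  | empty => simpa using M_zero hM
  | @insert a s ha ih =>
    rw [Finset.sum_insert ha]
    exact hM.add_mem _ (hg a (Finset.mem_insert_self a s)) _
      (ih fun i hi => hg i (Finset.mem_insert_of_mem hi))

omit hM

/-- The set of `M`-bounded elements. -/
def IsBdd (M : Set (NCSPoly n)) (a : NCSPoly n) : Prop :=
  ∃ N : ℝ, 0 < N ∧ ncConst N - ncStar a * a ∈ M

include hM

lemma bdd_add {a b : NCSPoly n} (ha : IsBdd M a) (hb : IsBdd M b) : IsBdd M (a + b) := by
  obtain ⟨N, hN, hNm⟩ := ha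
  obtain ⟨K, hK, hKm⟩ := hb
  refine ⟨2 * (N + K), by positivity, ?_⟩
  have key : ncConst (2 * (N + K)) - ncStar (a + b) * (a + b) =
      ((ncConst N - ncStar a * a) + (ncConst N - ncStar a * a)) +
      ((ncConst K - ncStar b * b) + (ncConst K - ncStar b * b)) +
      ncStar (a - b) * ncStar (ncStar (a - b)) := by
    rw [ncStar_ncStar, ncStar_add, ncStar_sub,
      show 2 * (N + K) = N + N + (K + K) by ring, ncConst_add, ncConst_add, ncConst_add]
    simp only [add_mul, mul_add, sub_mul, mul_sub]
    abel
  rw [key]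
  exact hM.add_mem _ (hM.add_mem _ (hM.add_mem _ hNm _ hNm) _ (hM.add_mem _ hKm _ hKm))
    _ (M_sq hM _)

lemma bdd_mul {a b : NCSPoly n} (ha : IsBdd M a) (hb : IsBdd M b) : IsBdd M (a * b) := by
  obtain ⟨N, hN, hNm⟩ := ha
  obtain ⟨K, hK, hKm⟩ := hb
  refine ⟨N * K, by positivity, ?_⟩
  have key : ncConst (N * K) - ncStar (a * b) * (a * b) =
      ncStar b * (ncConst N - ncStar a * a) * ncStar (ncStar b) +
      N • (ncConst K - ncStar b * b) := by
    rw [ncStar_ncStar, ncStar_mul, ncConst_eq_smul_one, ncConst_eq_smul_one,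
      ncConst_eq_smul_one]
    simp only [mul_sub, sub_mul, smul_sub, smul_add, mul_smul_comm, smul_mul_assoc,
      smul_smul, mul_one, one_mul, mul_assoc]
    module
  rw [key]
  exact hM.add_mem _ (hM.conj_mem (ncStar b) _ hNm) _ (M_smul hM hN.le hKm)

lemma bdd_star {a : NCSPoly n} (ha : IsBdd M a) : IsBdd M (ncStar a) := by
  obtain ⟨N, hN, hNm⟩ := ha
  refine ⟨N, hN, ?_⟩
  rw [ncStar_ncStar]
  have hsym : ncStar (ncConst N - a * ncStar a) = ncConst N - a * ncStar a := by
    rw [ncStar_sub, ncStar_ncConst, ncStar_mul, ncStar_ncStar]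
  have key : N • (ncConst N - a * ncStar a) =
      (ncConst N - a * ncStar a) * ncStar (ncConst N - a * ncStar a) +
        a * (ncConst N - ncStar a * a) * ncStar a := by
    rw [hsym, ncConst_eq_smul_one]
    simp only [mul_sub, sub_mul, smul_sub, smul_add, mul_smul_comm, smul_mul_assoc,
      smul_smul, mul_one, one_mul, mul_assoc]
    module
  have key2 : ncConst N - a * ncStar a =
      (1 / N) • ((ncConst N - a * ncStar a) * ncStar (ncConst N - a * ncStar a) +
        a * (ncConst N - ncStar a * a) * ncStar a) := by
    rw [← key, one_div, inv_smul_smul₀ hN.ne']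
  rw [key2]
  exact M_smul hM (by positivity) (hM.add_mem _ (M_sq hM _) _ (hM.conj_mem a _ hNm))

lemma bdd_const (r : ℝ) : IsBdd M (ncConst r : NCSPoly n) := by
  refine ⟨r ^ 2 + 1, by positivity, ?_⟩
  have : ncConst (r ^ 2 + 1) - ncStar (ncConst r : NCSPoly n) * ncConst r = 1 := by
    rw [ncStar_ncConst, ← ncConst_mul, ← ncConst_sub,
      show r ^ 2 + 1 - r * r = 1 by ring, ncConst_one]
  rw [this]
  exact hM.one_mem

lemma bdd_one : IsBdd M (1 : NCSPoly n) := by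
  have := bdd_const (M := M) hM 1
  rwa [ncConst_one] at this

lemma bdd_X {N : ℝ} (hN : 0 < N) (hb : ncConst N - ∑ j : Fin n, ncX j ^ 2 ∈ M)
    (i : Fin n) : IsBdd M (ncX i) := by
  refine ⟨N, hN, ?_⟩
  have key : ncConst N - ncStar (ncX i) * ncX i =
      (ncConst N - ∑ j : Fin n, ncX j ^ 2) + ∑ j ∈ Finset.univ.erase i, ncX j ^ 2 := by
    rw [ncStar_ncX, ← Finset.add_sum_erase Finset.univ (fun j => ncX j ^ 2)
      (Finset.mem_univ i), pow_two]
    abel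
  rw [key]
  refine hM.add_mem _ hb _ (M_sum hM fun j _ => ?_)
  have hj := M_sq hM (ncX j)
  rwa [ncStar_ncX, ← pow_two] at hj

lemma bdd_word {N : ℝ} (hN : 0 < N) (hb : ncConst N - ∑ j : Fin n, ncX j ^ 2 ∈ M) :
    ∀ l : List (Fin n),
      IsBdd M (MonoidAlgebra.single (FreeMonoid.ofList l) (1 : SPoly n))
  | [] => by
      have h1 : (MonoidAlgebra.single (FreeMonoid.ofList ([] : List (Fin n)))
          (1 : SPoly n) : NCSPoly n) = 1 := (MonoidAlgebra.one_def).symm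
      rw [h1]
      exact bdd_one hM
  | (i :: l) => by
      have h1 : (MonoidAlgebra.single (FreeMonoid.ofList (i :: l)) (1 : SPoly n) :
          NCSPoly n) = ncX i * MonoidAlgebra.single (FreeMonoid.ofList l) 1 := by
        rw [ncX, MonoidAlgebra.single_mul_single, one_mul]
        rfl
      rw [h1]
      exact bdd_mul hM (bdd_X hM hN hb i) (bdd_word hN hb l)

lemma sig_CS (h : NCSPoly n) : iotaS (sig (h * ncStar h) - sig h ^ 2) ∈ M := by
  set p := sig h with hp
  have hg := hM.sig_mem _ (M_sq hM (h - iotaS p))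
  rw [ncStar_sub, ncStar_iotaS] at hg
  have e2 : sig ((h - iotaS p) * (ncStar h - iotaS p)) = sig (h * ncStar h) - p ^ 2 := by
    rw [sub_mul, mul_sub, mul_sub, sig_sub, sig_sub, sig_sub, sig_mul_iotaS,
      sig_iotaS_mul, iotaS_mul_iotaS, sig_iotaS, sig_ncStar, ← hp]
    ring
  rw [e2] at hg
  exact hg

lemma bdd_sX {N₀ : ℝ} (hN₀ : 0 < N₀) (hb : ncConst N₀ - ∑ j : Fin n, ncX j ^ 2 ∈ M)
    (q : SW n) : IsBdd M (iotaS (MvPolynomial.X q)) := by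
  set lq : {l : List (Fin n) // l ≠ []} := Quotient.out q with hlq
  set h : NCSPoly n := MonoidAlgebra.single (FreeMonoid.ofList lq.1) (1 : SPoly n)
    with hh
  have hsig : sig h = MvPolynomial.X q := by
    rw [hh, sig_single, one_mul]
    show sigWordL lq.1 = _
    rw [sigWordL, dif_neg lq.2]
    congr 1
    exact Quotient.out_eq q
  have hw2 := bdd_star hM (bdd_word hM hN₀ hb lq.1)
  obtain ⟨K, hK, hKm⟩ := hw2
  rw [ncStar_ncStar] at hKm
  have m1 := hM.sig_mem _ hKm
  rw [sig_sub, sig_ncConst, iotaS_sub] at m1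
  have m2 := sig_CS hM h
  rw [iotaS_sub] at m2
  have m3 := hM.add_mem _ m1 _ m2
  refine ⟨K, hK, ?_⟩
  have e : ncConst K - ncStar (iotaS (MvPolynomial.X q)) * iotaS (MvPolynomial.X q) =
      (iotaS (MvPolynomial.C K) - iotaS (sig (h * ncStar h))) +
        (iotaS (sig (h * ncStar h)) - iotaS (sig h ^ 2)) := by
    rw [ncStar_iotaS, iotaS_mul_iotaS, ← pow_two, ← hsig]
    show iotaS (MvPolynomial.C K) - iotaS (sig h ^ 2) = _
    abel
  rw [e]
  exact m3

lemma bdd_iotaS {N₀ : ℝ} (hN₀ : 0 < N₀)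
    (hb : ncConst N₀ - ∑ j : Fin n, ncX j ^ 2 ∈ M) (p : SPoly n) :
    IsBdd M (iotaS p) := by
  induction p using MvPolynomial.induction_on with
  | C a => exact bdd_const hM a
  | add p q hp hq => rw [iotaS_add]; exact bdd_add hM hp hq
  | mul_X p q hp => rw [← iotaS_mul_iotaS]; exact bdd_mul hM hp (bdd_sX hM hN₀ hb q)

lemma bdd_all {N₀ : ℝ} (hN₀ : 0 < N₀)
    (hb : ncConst N₀ - ∑ j : Fin n, ncX j ^ 2 ∈ M) (f : NCSPoly n) : IsBdd M f := by
  induction f using MonoidAlgebra.induction_linear with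
  | zero =>
    have h0 := bdd_const (M := M) hM 0
    rwa [ncConst_zero] at h0
  | add f g hf hg => exact bdd_add hM hf hg
  | single w p =>
    have e : (MonoidAlgebra.single w p : NCSPoly n) =
        iotaS p * MonoidAlgebra.single w (1 : SPoly n) := by
      rw [iotaS, MonoidAlgebra.single_mul_single, one_mul, mul_one]
    show IsBdd M (MonoidAlgebra.single w p)
    rw [e]
    have hword : IsBdd M (MonoidAlgebra.single w (1 : SPoly n)) := by
      have hw := bdd_word hM hN₀ hb (FreeMonoid.toList w)
      rwa [FreeMonoid.ofList_toList] at hw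
    exact bdd_mul hM (bdd_iotaS hM hN₀ hb p) hword


end Aux

/-- Proposition `prop:cyclicqmarch`.
A quadratic state module `M ⊆ 𝐒` is archimedean if and only if there exists `N > 0` such
that `N − x_1² − ⋯ − x_n² ∈ M`. -/
theorem statement_9 (n : ℕ) (hn : 1 ≤ n) (M : Set (NCSPoly n))
    (hM : IsQuadStateModule M) :
    QSMArchimedean M ↔ ∃ N : ℝ, 0 < N ∧ ncConst N - ∑ i : Fin n, ncX i ^ 2 ∈ M := by
  constructor
  · intro harch
    have hsym : ncStar (∑ i : Fin n, ncX i ^ 2) = ∑ i : Fin n, ncX i ^ 2 := by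
      rw [ncStar_sum]
      refine Finset.sum_congr rfl fun i _ => ?_
      rw [pow_two, ncStar_mul, ncStar_ncX, ← pow_two]
    obtain ⟨N, hN, _, hm⟩ := harch _ hsym
    exact ⟨N, hN, hm⟩
  · rintro ⟨N₀, hN₀, hb⟩ f hf
    obtain ⟨N, hN, hNm⟩ := bdd_all hM hN₀ hb f
    rw [hf] at hNm
    refine ⟨(N + 1) / 2, by positivity, ?_, ?_⟩
    · have m2 := M_sq hM (1 + f)
      have key : ((1 : ℝ)/2) • ((ncConst N - f * f) + (1 + f) * ncStar (1 + f)) =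
          ncConst ((N + 1)/2) + f := by
        rw [ncStar_add, ncStar_one, hf, ncConst_eq_smul_one, ncConst_eq_smul_one]
        simp only [mul_add, add_mul, mul_one, one_mul, smul_sub, smul_add]
        module
      rw [← key]
      exact M_smul hM (by norm_num) (hM.add_mem _ hNm _ m2)
    · have m2 := M_sq hM (1 - f)
      have key : ((1 : ℝ)/2) • ((ncConst N - f * f) + (1 - f) * ncStar (1 - f)) =
          ncConst ((N + 1)/2) - f := by
        rw [ncStar_sub, ncStar_one, hf, ncConst_eq_smul_one, ncConst_eq_smul_one]
        simp only [mul_sub, sub_mul, mul_add, add_mul, mul_one, one_mul, smul_sub,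
          smul_add]
        module
      rw [← key]
      exact M_smul hM (by norm_num) (hM.add_mem _ hNm _ m2)

end StatePoly
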